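/- Let a = (a_0, ..., a_{n-1}) be a nonnegative real sequence, and let each index k be independently retained with probability p = 1 - q. Let the retained entries, in order, form the sequence \(\tilde{a}_0, \tilde{a}_1, \ldots\) (padded with zeros). Then for any real w \geq 0, \(\mathbb{E}[\sum_{j \geq 0} \tilde{a}_j w^j] = p \sum_{k=0}^{n-1} a_k (pw + q)^k\). -/

import Mathlib

private lemma key (n : ℕ) (a : Fin n → ℝ) (q w : ℝ) :
    ∑ m : Fin n → Bool,
        (∏ i : Fin n, if m i then 1 - q else q) *
          (∑ j ∈ Finset.range n,
            (((List.finRange n).filter (fun i => m i)).map a).getD j 0 * w ^ j)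
      = (1 - q) * ∑ k : Fin n, a k * ((1 - q) * w + q) ^ (k : ℕ) := by
  induction n with
  | zero => simp
  | succ n ih =>
    rw [← Equiv.sum_comp (Fin.consEquiv fun _ : Fin (n+1) => Bool)]
    rw [Fintype.sum_prod_type, Fintype.sum_bool]
    rw [show ((Fin.consEquiv fun _ : Fin (n+1) => Bool) : _ → _) = fun p => Fin.cons p.1 p.2 from rfl]
    have hfil : ∀ (b : Bool) (m : Fin n → Bool),
        ((List.finRange n).map Fin.succ).filter (fun i => Fin.cons (α := fun _ => Bool) b m i)
          = ((List.finRange n).filter (fun i => m i)).map Fin.succ := by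
      intro b m
      rw [List.filter_map]
      simp [Function.comp_def, Fin.cons_succ]
    have hlen : ∀ (m : Fin n → Bool),
        (((List.finRange n).filter (fun i => m i)).map (fun i => a i.succ)).length ≤ n := by
      intro m
      calc _ = ((List.finRange n).filter (fun i => m i)).length := List.length_map _
        _ ≤ (List.finRange n).length := List.length_filter_le _ _
        _ = n := List.length_finRange
    have htrue : ∀ (m : Fin n → Bool),
        (∑ j ∈ Finset.range (n+1),
          (((List.finRange (n+1)).filter (fun i => Fin.cons (α := fun _ => Bool) true m i)).map a).getD j 0 * w ^ j)
        = a 0 + w * ∑ j ∈ Finset.range n,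
            (((List.finRange n).filter (fun i => m i)).map (fun i => a i.succ)).getD j 0 * w ^ j := by
      intro m
      rw [List.finRange_succ]
      rw [show (List.filter (fun i => Fin.cons (α := fun _ => Bool) true m i)
        ((0 : Fin (n+1)) :: (List.finRange n).map Fin.succ)) =
        0 :: ((List.finRange n).filter (fun i => m i)).map Fin.succ by
          rw [List.filter_cons, hfil]; simp]
      rw [Finset.sum_range_succ']
      simp only [List.map_cons, List.getD_cons_succ, List.getD_cons_zero, pow_zero, mul_one,
        pow_succ', List.map_map, Function.comp_def]
      rw [add_comm, Finset.mul_sum]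
      congr 1
      apply Finset.sum_congr rfl
      intro j _
      ring
    have hfalse : ∀ (m : Fin n → Bool),
        (∑ j ∈ Finset.range (n+1),
          (((List.finRange (n+1)).filter (fun i => Fin.cons (α := fun _ => Bool) false m i)).map a).getD j 0 * w ^ j)
        = ∑ j ∈ Finset.range n,
            (((List.finRange n).filter (fun i => m i)).map (fun i => a i.succ)).getD j 0 * w ^ j := by
      intro m
      rw [List.finRange_succ]
      rw [show (List.filter (fun i => Fin.cons (α := fun _ => Bool) false m i)
        ((0 : Fin (n+1)) :: (List.finRange n).map Fin.succ)) =
        ((List.finRange n).filter (fun i => m i)).map Fin.succ by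
          rw [List.filter_cons, hfil]; simp]
      rw [Finset.sum_range_succ, List.map_map]
      simp only [Function.comp_def]
      rw [List.getD_eq_default _ _ (hlen m), zero_mul, add_zero]
    have hprod : ∀ (b : Bool) (m : Fin n → Bool),
        (∏ i : Fin (n+1), if Fin.cons (α := fun _ => Bool) b m i then 1 - q else q)
        = (if b then 1 - q else q) * ∏ i : Fin n, if m i then 1 - q else q := by
      intro b m
      rw [Fin.prod_univ_succ]
      simp [Fin.cons_succ]
    simp only [htrue, hfalse, hprod, if_true, if_false]
    have hsum1 : (∑ m : Fin n → Bool, ∏ i : Fin n, if m i then 1 - q else q) = 1 := by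
      rw [← Fintype.prod_sum fun (_ : Fin n) (b : Bool) => if b then 1 - q else q]
      simp
    have ihs := ih (fun i => a i.succ)
    rw [Fin.sum_univ_succ]
    simp only [Fin.val_zero, pow_zero, mul_one, Fin.val_succ]
    simp only [Bool.false_eq_true, if_false]
    trans ((1 - q) * a 0 * (∑ m : Fin n → Bool, ∏ i : Fin n, if m i then 1 - q else q)
        + ((1 - q) * w + q) * ∑ m : Fin n → Bool,
            (∏ i : Fin n, if m i then 1 - q else q) *
              ∑ j ∈ Finset.range n,
                (List.map (fun i => a i.succ) (List.filter (fun i => m i) (List.finRange n))).getD j 0 * w ^ j)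
    · rw [Finset.mul_sum, Finset.mul_sum, ← Finset.sum_add_distrib, ← Finset.sum_add_distrib]
      exact Finset.sum_congr rfl fun m _ => by ring
    · rw [hsum1, ihs]
      simp only [pow_succ, ← mul_assoc]
      rw [← Finset.sum_mul]
      ring


/-- Let `a = (a_0, ..., a_{n-1})` be a nonnegative real sequence, each index
retained independently with probability `p = 1 - q`, and let `ã` be the subsequence of
retained entries (padded with zeros). Then for `w ≥ 0`,
`E[∑_j ã_j w^j] = p ∑_k a_k (p w + q)^k`. The expectation is written as an explicit sum
over all retention patterns `m : Fin n → Bool` (`m i = true` means `a_i` retained, which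
happens with probability `p = 1 - q`). -/
theorem stmt_3 (n : ℕ) (a : Fin n → ℝ) (ha : ∀ k, 0 ≤ a k) (q : ℝ)
    (hq0 : 0 ≤ q) (hq1 : q ≤ 1) (w : ℝ) (hw : 0 ≤ w) :
    ∑ m : Fin n → Bool,
        (∏ i : Fin n, if m i then 1 - q else q) *
          (∑ j ∈ Finset.range n,
            (((List.finRange n).filter (fun i => m i)).map a).getD j 0 * w ^ j)
      = (1 - q) * ∑ k : Fin n, a k * ((1 - q) * w + q) ^ (k : ℕ) := by
  exact key n a q w
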